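/- Let μ be the countable product of the uniform probability measures on [−1/2, 1/2] on the space [−1/2,1/2]^ℕ. Let p ∈ (0,1) and K > 0, and let (b_j)_{j≥1} be a nonincreasing sequence of nonnegative real numbers with Σ_{j≥1} b_j^p ≤ K. Then there exists a constant C, depending only on p and K, such that for every integer s ≥ 1 with Σ_{j≥s+1} b_j ≤ 1/2, Σ_{ℓ=1}^{∞} ∫ ( Σ_{j≥s+1} b_j y_j )^ℓ dμ(y) ≤ C · s^{−2/p + 1}; in particular every summand is nonnegative (the odd-ℓ integrals vanish) and the series converges. -/

import Mathlib

open MeasureTheory ProbabilityTheory Filter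

set_option maxHeartbeats 1000000

private lemma negInv (μ : Measure (ℕ → ℝ)) [IsProbabilityMeasure μ]
    (hIndep : iIndepFun (m := fun _ : ℕ => (inferInstance : MeasurableSpace ℝ))
      (fun j => fun y : ℕ → ℝ => y j) μ)
    (hUnif : ∀ j : ℕ, μ.map (fun y : ℕ → ℝ => y j) =
      volume.restrict (Set.Icc (-(1 / 2) : ℝ) (1 / 2))) :
    μ.map (fun y : ℕ → ℝ => fun j => -(y j)) = μ := by
  set T : (ℕ → ℝ) → (ℕ → ℝ) := fun y => fun j => -(y j) with hTdef
  have hT : Measurable T := measurable_pi_lambda _ fun j => (measurable_pi_apply j).neg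
  haveI : IsProbabilityMeasure (μ.map T) := Measure.isProbabilityMeasure_map hT.aemeasurable
  have hcoord : ∀ (j : ℕ) (A : Set ℝ), MeasurableSet A →
      μ ((fun y : ℕ → ℝ => y j) ⁻¹' (Neg.neg ⁻¹' A)) = μ ((fun y : ℕ → ℝ => y j) ⁻¹' A) := by
    intro j A hA
    have h1 : μ ((fun y : ℕ → ℝ => y j) ⁻¹' A) = (μ.map (fun y : ℕ → ℝ => y j)) A :=
      (Measure.map_apply (measurable_pi_apply j) hA).symm
    have h2 : μ ((fun y : ℕ → ℝ => y j) ⁻¹' (Neg.neg ⁻¹' A))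
        = (μ.map (fun y : ℕ → ℝ => y j)) (Neg.neg ⁻¹' A) :=
      (Measure.map_apply (measurable_pi_apply j) (measurable_neg hA)).symm
    rw [h1, h2, hUnif j, Measure.restrict_apply (measurable_neg hA), Measure.restrict_apply hA]
    have hIcc : Neg.neg ⁻¹' (Set.Icc (-(1/2) : ℝ) (1/2)) = Set.Icc (-(1/2) : ℝ) (1/2) := by
      ext x
      simp only [Set.mem_preimage, Set.mem_Icc]
      constructor <;> intro h <;> constructor <;> linarith [h.1, h.2]
    have : Neg.neg ⁻¹' A ∩ Set.Icc (-(1/2) : ℝ) (1/2)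
        = Neg.neg ⁻¹' (A ∩ Set.Icc (-(1/2) : ℝ) (1/2)) := by
      rw [Set.preimage_inter, hIcc]
    rw [this]
    exact Measure.measure_preimage_neg volume _
  refine ext_of_generate_finite
    (squareCylinders fun _ : ℕ => {s : Set ℝ | MeasurableSet s})
    generateFrom_squareCylinders.symm
    (isPiSystem_squareCylinders (fun i => MeasurableSpace.isPiSystem_measurableSet)
      (fun i => show MeasurableSet (Set.univ : Set ℝ) from MeasurableSet.univ)) ?_ ?_
  · rintro S ⟨s, t, ht, rfl⟩
    simp only [Set.mem_univ_pi, Set.mem_setOf_eq] at ht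
    have hpi : ∀ (u : ℕ → Set ℝ), (↑s : Set ℕ).pi u
        = ⋂ i ∈ s, (fun y : ℕ → ℝ => y i) ⁻¹' u i := by
      intro u; ext y; simp [Set.mem_pi]
    have hmeas : MeasurableSet ((↑s : Set ℕ).pi t) :=
      MeasurableSet.pi (Finset.countable_toSet _) (fun i _ => ht i)
    rw [Measure.map_apply hT hmeas]
    have hpre : T ⁻¹' ((↑s : Set ℕ).pi t) = (↑s : Set ℕ).pi (fun i => Neg.neg ⁻¹' t i) := by
      ext y; simp [Set.mem_pi, hTdef]
    rw [hpre, hpi, hpi]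
    rw [hIndep.measure_inter_preimage_eq_mul s (fun i _ => measurable_neg (ht i)),
        hIndep.measure_inter_preimage_eq_mul s (fun i _ => ht i)]
    exact Finset.prod_congr rfl fun i _ => hcoord i (t i) (ht i)
  · simp

theorem stmt12 (μ : Measure (ℕ → ℝ)) [IsProbabilityMeasure μ]
    (hIndep : iIndepFun (m := fun _ : ℕ => (inferInstance : MeasurableSpace ℝ))
      (fun j => fun y : ℕ → ℝ => y j) μ)
    (hUnif : ∀ j : ℕ, μ.map (fun y : ℕ → ℝ => y j) =
      volume.restrict (Set.Icc (-(1 / 2) : ℝ) (1 / 2)))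
    (p K : ℝ) (hp : 0 < p) (hp1 : p < 1) (hK : 0 < K) :
    ∃ C : ℝ, ∀ b : ℕ → ℝ, (∀ n, 0 ≤ b n) → Antitone b →
      Summable (fun n => b n ^ p) → (∑' n : ℕ, b n ^ p) ≤ K →
      ∀ s : ℕ, 1 ≤ s → (∑' n : ℕ, b (n + s)) ≤ 1 / 2 →
        (∀ l : ℕ,
          0 ≤ ∫ y : ℕ → ℝ, (∑' n : ℕ, b (n + s) * y (n + s)) ^ (l + 1) ∂μ) ∧
        Summable (fun l : ℕ =>
          ∫ y : ℕ → ℝ, (∑' n : ℕ, b (n + s) * y (n + s)) ^ (l + 1) ∂μ) ∧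
        (∑' l : ℕ, ∫ y : ℕ → ℝ, (∑' n : ℕ, b (n + s) * y (n + s)) ^ (l + 1) ∂μ)
          ≤ C * (s : ℝ) ^ (-2 / p + 1) := by
  classical
  -- basic marginal facts
  have key : ∀ j : ℕ, μ ((fun y : ℕ → ℝ => y j) ⁻¹' (Set.Icc (-(1/2):ℝ) (1/2))ᶜ) = 0 := by
    intro j
    rw [← Measure.map_apply (measurable_pi_apply j) measurableSet_Icc.compl, hUnif j,
      Measure.restrict_apply measurableSet_Icc.compl]
    simp
  have hGae : ∀ᵐ y ∂μ, ∀ j, |y j| ≤ 1/2 := by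
    rw [ae_all_iff]
    intro j
    refine ae_iff.2 ?_
    convert key j using 2
    ext y
    simp [abs_le]
  have hmean : ∀ j : ℕ, ∫ y : ℕ → ℝ, y j ∂μ = 0 := by
    intro j
    have h : ∫ y : ℕ → ℝ, y j ∂μ = ∫ x : ℝ, x ∂(μ.map (fun y : ℕ → ℝ => y j)) := by
      rw [integral_map (measurable_pi_apply j).aemeasurable]
      rw [hUnif j]
      exact measurable_id.aestronglyMeasurable
    rw [h, hUnif j, integral_Icc_eq_integral_Ioc,
      ← intervalIntegral.integral_of_le (by norm_num : (-(1/2):ℝ) ≤ 1/2), integral_id]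
    norm_num
  have hsecond : ∀ j : ℕ, ∫ y : ℕ → ℝ, (y j) ^ 2 ∂μ = 1/12 := by
    intro j
    have h : ∫ y : ℕ → ℝ, (y j) ^ 2 ∂μ = ∫ x : ℝ, x ^ 2 ∂(μ.map (fun y : ℕ → ℝ => y j)) := by
      rw [integral_map (measurable_pi_apply j).aemeasurable]
      rw [hUnif j]
      exact (measurable_id.pow_const 2).aestronglyMeasurable
    rw [h, hUnif j, integral_Icc_eq_integral_Ioc,
      ← intervalIntegral.integral_of_le (by norm_num : (-(1/2):ℝ) ≤ 1/2), integral_pow]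
    norm_num
  have hprodint : ∀ i j : ℕ, Integrable (fun y : ℕ → ℝ => y i * y j) μ := by
    intro i j
    refine Integrable.mono' (integrable_const (1/4 : ℝ))
      ((measurable_pi_apply i).mul (measurable_pi_apply j)).aestronglyMeasurable ?_
    filter_upwards [hGae] with y hy
    rw [Real.norm_eq_abs, abs_mul]
    nlinarith [hy i, hy j, abs_nonneg (y i), abs_nonneg (y j)]
  have hcross : ∀ i j : ℕ, i ≠ j → ∫ y : ℕ → ℝ, y i * y j ∂μ = 0 := by
    intro i j hij
    have h := IndepFun.integral_mul_eq_mul_integral (hIndep.indepFun hij)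
      (measurable_pi_apply i).aestronglyMeasurable
      (measurable_pi_apply j).aestronglyMeasurable
    have h2 : ∫ y : ℕ → ℝ, y i * y j ∂μ
        = (∫ y : ℕ → ℝ, y i ∂μ) * (∫ y : ℕ → ℝ, y j ∂μ) := h
    rw [h2, hmean i, hmean j, mul_zero]
  refine ⟨K ^ (2 / p), ?_⟩
  intro b hb0 hbmono hbsum hbK s hs htail
  have hsR : (0:ℝ) < s := by exact_mod_cast hs
  -- ===== tail analysis (pure) =====
  have hcp : Summable (fun n => b (n + s) ^ p) := (summable_nat_add_iff s).2 hbsum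
  have hcpK : (∑' n, b (n + s) ^ p) ≤ K := by
    have h := Summable.sum_add_tsum_nat_add s hbsum
    have hnn : 0 ≤ ∑ i ∈ Finset.range s, b i ^ p :=
      Finset.sum_nonneg fun i _ => Real.rpow_nonneg (hb0 i) p
    linarith
  have hbsK : b s ^ p ≤ K / s := by
    have h1 : (s : ℝ) * b s ^ p ≤ ∑' n, b n ^ p := by
      have h2 : (s : ℝ) * b s ^ p = ∑ k ∈ Finset.range s, b s ^ p := by
        simp [mul_comm]
      rw [h2]
      refine (Finset.sum_le_sum fun k hk => ?_).trans
        (Summable.sum_le_tsum _ (fun i _ => Real.rpow_nonneg (hb0 i) p) hbsum)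
      exact Real.rpow_le_rpow (hb0 s) (hbmono (Finset.mem_range.mp hk).le) hp.le
    rw [le_div_iff₀ hsR]
    nlinarith [hbK]
  have hble : ∀ n, b (n + s) ≤ b s := fun n => hbmono (Nat.le_add_left s n)
  have hsq : ∀ n, b (n + s) ^ (2:ℕ) ≤ b s ^ (2 - p) * b (n + s) ^ p := by
    intro n
    have h1 : b (n + s) ^ (2:ℕ) = b (n + s) ^ ((2:ℝ)) := (Real.rpow_natCast _ 2).symm
    have h2 : b (n + s) ^ ((2:ℝ)) = b (n + s) ^ (2 - p) * b (n + s) ^ p := by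
      rw [← Real.rpow_add' (hb0 _) (by norm_num)]
      norm_num
    rw [h1, h2]
    exact mul_le_mul_of_nonneg_right
      (Real.rpow_le_rpow (hb0 _) (hble n) (show (0:ℝ) ≤ 2 - p by linarith))
      (Real.rpow_nonneg (hb0 _) p)
  have hsqsummable : Summable (fun n => b (n + s) ^ (2:ℕ)) :=
    Summable.of_nonneg_of_le (fun n => by positivity) hsq (hcp.mul_left _)
  have hsqsum : (∑' n, b (n + s) ^ (2:ℕ)) ≤ b s ^ (2 - p) * K := by
    refine (Summable.tsum_le_tsum hsq hsqsummable (hcp.mul_left _)).trans ?_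
    rw [tsum_mul_left]
    exact mul_le_mul_of_nonneg_left hcpK (Real.rpow_nonneg (hb0 s) _)
  have hcsum : Summable (fun n => b (n + s)) := by
    refine Summable.of_nonneg_of_le (fun n => hb0 _) (fun n => ?_) (hcp.mul_left (b s ^ (1 - p)))
    have h2 : b (n + s) = b (n + s) ^ (1 - p) * b (n + s) ^ p := by
      rw [← Real.rpow_add' (hb0 _) (by norm_num)]
      norm_num
    calc b (n + s) = b (n + s) ^ (1 - p) * b (n + s) ^ p := h2
      _ ≤ b s ^ (1 - p) * b (n + s) ^ p :=
        mul_le_mul_of_nonneg_right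
          (Real.rpow_le_rpow (hb0 _) (hble n) (show (0:ℝ) ≤ 1 - p by linarith))
          (Real.rpow_nonneg (hb0 _) p)
  have hfinal : b s ^ (2 - p) * K ≤ K ^ (2 / p) * (s:ℝ) ^ (-2 / p + 1) := by
    have hq0 : (0:ℝ) ≤ (2 - p) / p := div_nonneg (by linarith) hp.le
    have h1 : b s ^ (2 - p) = (b s ^ p) ^ ((2 - p) / p) := by
      rw [← Real.rpow_mul (hb0 s)]
      congr 1
      field_simp
    have h2 : (b s ^ p) ^ ((2 - p) / p) ≤ (K / s) ^ ((2 - p) / p) :=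
      Real.rpow_le_rpow (Real.rpow_nonneg (hb0 s) p) hbsK hq0
    have h3 : (K / (s:ℝ)) ^ ((2 - p) / p) = K ^ ((2 - p) / p) * (s:ℝ) ^ (-((2 - p) / p)) := by
      rw [Real.div_rpow hK.le (Nat.cast_nonneg s), Real.rpow_neg (Nat.cast_nonneg s)]
      ring
    have h4 : K ^ ((2 - p) / p) * K = K ^ (2 / p) := by
      nth_rewrite 2 [← Real.rpow_one K]
      rw [← Real.rpow_add hK]
      congr 1
      field_simp
      ring
    have h5 : (-((2 - p) / p)) = -2 / p + 1 := by
      field_simp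
      ring
    calc b s ^ (2 - p) * K ≤ (K / s) ^ ((2 - p) / p) * K :=
          mul_le_mul_of_nonneg_right (h1 ▸ h2) hK.le
      _ = K ^ (2 / p) * (s:ℝ) ^ (-2 / p + 1) := by
          rw [h3, h5]
          rw [mul_comm (K ^ ((2 - p) / p)) _, mul_assoc, h4]
          ring
  -- ===== the random series X and its partial sums =====
  set X : (ℕ → ℝ) → ℝ := fun y => ∑' n : ℕ, b (n + s) * y (n + s) with hXdef
  set S : ℕ → (ℕ → ℝ) → ℝ := fun N y => ∑ n ∈ Finset.range N, b (n + s) * y (n + s) with hSdef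
  have hSmeas : ∀ N, Measurable (S N) := fun N =>
    Finset.measurable_sum _ fun n _ => (measurable_pi_apply (n + s)).const_mul _
  have hpt : ∀ y : ℕ → ℝ, (∀ j, |y j| ≤ 1/2) →
      Summable (fun n => b (n + s) * y (n + s)) ∧ |X y| ≤ 1/4 ∧ (∀ N, |S N y| ≤ 1/4)
      ∧ Tendsto (fun N => S N y) atTop (nhds (X y)) := by
    intro y hy
    have habs : ∀ n, |b (n + s) * y (n + s)| ≤ b (n + s) * (1/2) := by
      intro n
      rw [abs_mul, abs_of_nonneg (hb0 _)]
      exact mul_le_mul_of_nonneg_left (hy _) (hb0 _)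
    have hsummable : Summable (fun n => b (n + s) * y (n + s)) := by
      refine Summable.of_abs (Summable.of_nonneg_of_le (fun n => abs_nonneg _) habs ?_)
      exact hcsum.mul_right _
    have htsabs : (∑' n, |b (n + s) * y (n + s)|) ≤ 1/4 := by
      have h1 : (∑' n, |b (n + s) * y (n + s)|) ≤ ∑' n, b (n + s) * (1/2) :=
        Summable.tsum_le_tsum habs hsummable.abs (hcsum.mul_right _)
      have h2 : (∑' n, b (n + s) * (1/2)) = (∑' n, b (n + s)) * (1/2) := tsum_mul_right
      linarith [htail]
    refine ⟨hsummable, ?_, ?_, hsummable.hasSum.tendsto_sum_nat⟩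
    · calc |X y| = ‖∑' n, b (n + s) * y (n + s)‖ := (Real.norm_eq_abs _).symm
        _ ≤ ∑' n, ‖b (n + s) * y (n + s)‖ := norm_tsum_le_tsum_norm
            (by simp only [Real.norm_eq_abs]; exact hsummable.abs)
        _ = ∑' n, |b (n + s) * y (n + s)| := by simp only [Real.norm_eq_abs]
        _ ≤ 1/4 := htsabs
    · intro N
      calc |S N y| ≤ ∑ n ∈ Finset.range N, |b (n + s) * y (n + s)| := Finset.abs_sum_le_sum_abs _ _
        _ ≤ ∑' n, |b (n + s) * y (n + s)| :=
            Summable.sum_le_tsum _ (fun n _ => abs_nonneg _) hsummable.abs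
        _ ≤ 1/4 := htsabs
  have hXb : ∀ᵐ y ∂μ, |X y| ≤ 1/4 := by
    filter_upwards [hGae] with y hy using (hpt y hy).2.1
  have hStend : ∀ᵐ y ∂μ, Tendsto (fun N => S N y) atTop (nhds (X y)) := by
    filter_upwards [hGae] with y hy using (hpt y hy).2.2.2
  have hSb : ∀ N, ∀ᵐ y ∂μ, |S N y| ≤ 1/4 := by
    intro N
    filter_upwards [hGae] with y hy using (hpt y hy).2.2.1 N
  have hXmeas : AEStronglyMeasurable X μ :=
    aestronglyMeasurable_of_tendsto_ae atTop (fun N => (hSmeas N).aestronglyMeasurable) hStend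
  have hint : ∀ k : ℕ, Integrable (fun y => X y ^ k) μ := by
    intro k
    refine Integrable.mono' (integrable_const ((1/4 : ℝ) ^ k))
      (hXmeas.aemeasurable.pow_const k).aestronglyMeasurable ?_
    filter_upwards [hXb] with y hy
    rw [Real.norm_eq_abs, abs_pow]
    exact pow_le_pow_left₀ (abs_nonneg _) hy k
  -- ===== odd moments vanish =====
  have hodd : ∀ k : ℕ, Odd k → ∫ y, X y ^ k ∂μ = 0 := by
    intro k hk
    have hmapeq := negInv μ hIndep hUnif
    have hT : Measurable (fun y : ℕ → ℝ => fun j => -(y j)) :=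
      measurable_pi_lambda _ fun j => (measurable_pi_apply j).neg
    have h1 : ∫ y, X y ^ k ∂μ = ∫ y, X (fun j => -(y j)) ^ k ∂μ := by
      conv_lhs => rw [← hmapeq]
      rw [integral_map hT.aemeasurable]
      rw [hmapeq]
      exact (hint k).1
    have h2 : ∀ y : ℕ → ℝ, X (fun j => -(y j)) = - X y := by
      intro y
      rw [hXdef]
      simp only
      rw [← tsum_neg]
      congr 1
      ext n
      ring
    have h3 : (fun y : ℕ → ℝ => X (fun j => -(y j)) ^ k) = fun y => -(X y ^ k) := by
      funext y
      rw [h2 y, hk.neg_pow]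
    rw [h3, integral_neg] at h1
    linarith
  -- ===== second moment =====
  have hSN2 : ∀ N, ∫ y, (S N y) ^ 2 ∂μ
      = (∑ n ∈ Finset.range N, b (n + s) ^ (2:ℕ)) * (1/12) := by
    intro N
    have hexp : ∀ y : ℕ → ℝ, (S N y) ^ 2 = ∑ n ∈ Finset.range N, ∑ m ∈ Finset.range N,
        (b (n + s) * b (m + s)) * (y (n + s) * y (m + s)) := by
      intro y
      rw [hSdef]
      simp only
      rw [sq, Finset.sum_mul_sum]
      exact Finset.sum_congr rfl fun n _ => Finset.sum_congr rfl fun m _ => by ring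
    simp_rw [hexp]
    rw [integral_finset_sum _ (fun n _ => integrable_finset_sum _
      (fun m _ => (hprodint (n + s) (m + s)).const_mul _))]
    have hterm : ∀ n ∈ Finset.range N,
        ∫ y, (∑ m ∈ Finset.range N, (b (n + s) * b (m + s)) * (y (n + s) * y (m + s))) ∂μ
        = b (n + s) ^ (2:ℕ) * (1/12) := by
      intro n hn
      rw [integral_finset_sum _ (fun m _ => (hprodint (n + s) (m + s)).const_mul _)]
      have : ∀ m ∈ Finset.range N,
          ∫ y, (b (n + s) * b (m + s)) * (y (n + s) * y (m + s)) ∂μ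
          = if m = n then b (n + s) ^ (2:ℕ) * (1/12) else 0 := by
        intro m _
        rw [integral_const_mul]
        by_cases hmn : m = n
        · subst hmn
          rw [if_pos rfl]
          have : ∫ y : ℕ → ℝ, y (m + s) * y (m + s) ∂μ = 1/12 := by
            simpa [sq] using hsecond (m + s)
          rw [this]
          ring
        · rw [if_neg hmn, hcross (n + s) (m + s) (by omega), mul_zero]
      rw [Finset.sum_congr rfl this, Finset.sum_ite_eq' (Finset.range N) n
        (fun _ => b (n + s) ^ (2:ℕ) * (1/12)), if_pos hn]
    rw [Finset.sum_congr rfl hterm, ← Finset.sum_mul]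
  have hV : ∫ y, X y ^ 2 ∂μ = (∑' n, b (n + s) ^ (2:ℕ)) * (1/12) := by
    have h1 : Tendsto (fun N => ∫ y, (S N y) ^ 2 ∂μ) atTop (nhds (∫ y, X y ^ 2 ∂μ)) := by
      refine tendsto_integral_of_dominated_convergence (fun _ => (1/4 : ℝ)^2)
        (fun N => ((hSmeas N).pow_const 2).aestronglyMeasurable)
        (integrable_const _) (fun N => ?_) ?_
      · filter_upwards [hSb N] with y hy
        rw [Real.norm_eq_abs, abs_pow]
        exact pow_le_pow_left₀ (abs_nonneg _) hy 2
      · filter_upwards [hStend] with y hy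
        exact hy.pow 2
    have h2 : Tendsto (fun N => ∫ y, (S N y) ^ 2 ∂μ) atTop
        (nhds ((∑' n, b (n + s) ^ (2:ℕ)) * (1/12))) := by
      simp_rw [hSN2]
      exact (hsqsummable.hasSum.tendsto_sum_nat).mul_const _
    exact tendsto_nhds_unique h1 h2
  have hVnn : 0 ≤ ∫ y, X y ^ 2 ∂μ := integral_nonneg fun y => sq_nonneg _
  set V : ℝ := ∫ y, X y ^ 2 ∂μ with hVdef
  -- ===== moment bounds =====
  have hmom : ∀ k : ℕ, 2 ≤ k → |∫ y, X y ^ k ∂μ| ≤ (1/4 : ℝ) ^ (k - 2) * V := by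
    intro k hk
    have h1 : |∫ y, X y ^ k ∂μ| ≤ ∫ y, |X y ^ k| ∂μ := by
      simpa [Real.norm_eq_abs] using norm_integral_le_integral_norm (fun y => X y ^ k)
    refine h1.trans ?_
    have h2 : ∫ y, |X y ^ k| ∂μ ≤ ∫ y, (1/4 : ℝ) ^ (k - 2) * X y ^ 2 ∂μ := by
      refine integral_mono_ae (hint k).abs ((hint 2).const_mul _) ?_
      filter_upwards [hXb] with y hy
      have hXynn : (0:ℝ) ≤ |X y| := abs_nonneg _
      calc |X y ^ k| = |X y| ^ (k - 2) * |X y| ^ 2 := by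
            rw [abs_pow, ← pow_add]
            congr 1
            omega
        _ ≤ (1/4 : ℝ) ^ (k - 2) * X y ^ 2 := by
            rw [← sq_abs (X y)]
            exact mul_le_mul_of_nonneg_right (pow_le_pow_left₀ hXynn hy _) (sq_nonneg _)
    rw [integral_const_mul] at h2
    exact h2
  -- ===== conclusion =====
  set a : ℕ → ℝ := fun l => ∫ y, X y ^ (l + 1) ∂μ with hadef
  set g : ℕ → ℝ := fun l => (4 * V) * (1/4 : ℝ) ^ l with hgdef
  have hag : ∀ l, |a l| ≤ g l := by
    intro l
    rcases Nat.eq_zero_or_pos l with hl | hl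
    · subst hl
      have : a 0 = 0 := hodd 1 (by norm_num)
      rw [this, abs_zero, hgdef]
      simp
      positivity
    · have h1 := hmom (l + 1) (by omega)
      have h2 : (1/4 : ℝ) ^ (l + 1 - 2) * V = g l := by
        rw [hgdef]
        simp only
        have : l + 1 - 2 = l - 1 := by omega
        rw [this]
        have hl1 : l - 1 + 1 = l := by omega
        calc (1/4 : ℝ) ^ (l - 1) * V = 4 * V * ((1/4 : ℝ) ^ (l-1) * (1/4)) := by ring
          _ = 4 * V * (1/4 : ℝ) ^ l := by rw [← pow_succ, hl1]
      rw [← h2]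
      exact h1
  have hgsummable : Summable g :=
    ((summable_geometric_of_lt_one (by norm_num) (by norm_num)).mul_left _)
  have hasummable : Summable a := by
    refine Summable.of_norm_bounded hgsummable ?_
    simpa [Real.norm_eq_abs] using hag
  have hsumbound : (∑' l, a l) ≤ K ^ (2 / p) * (s:ℝ) ^ (-2 / p + 1) := by
    have h1 : (∑' l, a l) ≤ ∑' l, g l :=
      Summable.tsum_le_tsum (fun l => (le_abs_self _).trans (hag l)) hasummable hgsummable
    have h2 : (∑' l, g l) = (4 * V) * (1 - 1/4 : ℝ)⁻¹ := by
      rw [hgdef, tsum_mul_left, tsum_geometric_of_lt_one (by norm_num) (by norm_num)]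
    have h3 : (4 * V) * (1 - 1/4 : ℝ)⁻¹ = (16/3) * V := by ring
    have h4 : (16/3 : ℝ) * V ≤ b s ^ (2 - p) * K := by
      have h0 : (0:ℝ) ≤ ∑' n, b (n + s) ^ (2:ℕ) := tsum_nonneg fun n => sq_nonneg _
      rw [hV]
      linarith [hsqsum]
    calc (∑' l, a l) ≤ (16/3) * V := by rw [← h3, ← h2]; exact h1
      _ ≤ b s ^ (2 - p) * K := h4
      _ ≤ K ^ (2 / p) * (s:ℝ) ^ (-2 / p + 1) := hfinal
  refine ⟨?_, hasummable, hsumbound⟩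
  intro l
  rcases Nat.even_or_odd (l + 1) with he | ho
  · exact integral_nonneg fun y => he.pow_nonneg _
  · rw [show (∫ y : ℕ → ℝ, (∑' n : ℕ, b (n + s) * y (n + s)) ^ (l + 1) ∂μ) = a l from rfl,
      hadef]
    simp only
    rw [hodd (l + 1) ho]
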